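/- Let D = A∂_X + B∂_Y with A, B ∈ ℤ[X,Y], deg A, deg B ≤ d, ‖A‖_∞, ‖B‖_∞ ≤ H, and let f ∈ ℤ[X,Y] with deg f ≤ N. Then for every i ≥ 1, ‖D^i(f)‖_∞ ≤ 2^i·H^i·(∏_{k=0}^{i−1}(k(d−1)+N)³)·‖f‖_∞. -/

import Mathlib

open MvPolynomial

private lemma deg2_eq (m : Fin 2 →₀ ℕ) : (m.sum fun _ e => e) = m 0 + m 1 := by
  rw [Finsupp.sum_fintype _ _ (fun _ => rfl), Fin.sum_univ_two]

private lemma coeff_pderiv' (i : Fin 2) (g : MvPolynomial (Fin 2) ℤ) (m : Fin 2 →₀ ℕ) :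
    coeff m (pderiv i g) = ((m i : ℤ) + 1) * coeff (m + Finsupp.single i 1) g := by
  induction g using MvPolynomial.induction_on' with
  | monomial s a =>
      rw [pderiv_monomial, coeff_monomial, coeff_monomial]
      by_cases h : s = m + Finsupp.single i 1
      · subst h
        have h1 : (m + Finsupp.single i 1) - Finsupp.single i 1 = m := by
          ext j
          simp [Finsupp.tsub_apply, Finsupp.add_apply]
        rw [if_pos h1, if_pos rfl]
        simp only [Finsupp.add_apply, Finsupp.single_apply, if_pos rfl]
        push_cast
        ring
      · rw [if_neg h]
        by_cases h2 : s - Finsupp.single i 1 = m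
        · rw [if_pos h2]
          have hsi : s i = 0 := by
            by_contra hs
            apply h
            have h3 : ∀ j, s j - (Finsupp.single i 1 : Fin 2 →₀ ℕ) j = m j := fun j => by
              rw [← h2]; simp [Finsupp.tsub_apply]
            ext j
            rw [Finsupp.add_apply, ← h3 j]; simp only [Finsupp.single_apply]
            split_ifs with hij
            · subst hij; omega
            · omega
          simp [hsi]
        · rw [if_neg h2]; ring
  | add p q hp hq =>
      simp only [map_add, coeff_add, hp, hq]
      ring

private lemma card_support_le (p : MvPolynomial (Fin 2) ℤ) (a : ℕ)
    (h : ∀ m ∈ p.support, m 0 < a ∧ m 1 < a) : p.support.card ≤ a ^ 2 := by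
  have : p.support.card ≤ ((Finset.range a) ×ˢ (Finset.range a)).card := by
    apply Finset.card_le_card_of_injOn (fun m => (m 0, m 1))
    · intro m hm
      simp only [Finset.coe_product, Finset.coe_range, Set.mem_prod, Set.mem_Iio]
      exact h m hm
    · intro m1 _ m2 _ he
      have h0 : m1 0 = m2 0 := congrArg Prod.fst he
      have h1 : m1 1 = m2 1 := congrArg Prod.snd he
      ext j
      fin_cases j <;> assumption
  simpa [Finset.card_product, sq] using this

/-- Support bound for `pderiv`. -/
private lemma pderiv_support (i : Fin 2) (g : MvPolynomial (Fin 2) ℤ) (M : ℕ)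
    (hdg : ∀ m ∈ g.support, m 0 + m 1 ≤ M) :
    ∀ m ∈ (pderiv i g).support, m 0 + m 1 + 1 ≤ M := by
  intro m hm
  rw [MvPolynomial.mem_support_iff, coeff_pderiv'] at hm
  have hne : coeff (m + Finsupp.single i 1) g ≠ 0 := by
    intro h; rw [h, mul_zero] at hm; exact hm rfl
  have hmem := hdg _ (MvPolynomial.mem_support_iff.2 hne)
  simp only [Finsupp.add_apply, Finsupp.single_apply] at hmem
  fin_cases i <;> simp at hmem <;> omega

/-- Coefficient bound for `pderiv`. -/
private lemma pderiv_coeff_bound (i : Fin 2) (g : MvPolynomial (Fin 2) ℤ) (M : ℕ) (C : ℤ)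
    (hC : 0 ≤ C) (hdg : ∀ m ∈ g.support, m 0 + m 1 ≤ M) (hg : ∀ m, |g.coeff m| ≤ C) :
    ∀ m, |(pderiv i g).coeff m| ≤ (M : ℤ) * C := by
  intro m
  rw [coeff_pderiv']
  by_cases hz : coeff (m + Finsupp.single i 1) g = 0
  · rw [hz, mul_zero, abs_zero]
    positivity
  · have hmem := hdg _ (MvPolynomial.mem_support_iff.2 hz)
    have hi : m i + 1 ≤ M := by
      simp only [Finsupp.add_apply, Finsupp.single_apply] at hmem
      fin_cases i <;> simp at hmem ⊢ <;> omega
    rw [abs_mul]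
    have habs : |((m i : ℤ) + 1)| = (m i : ℤ) + 1 := abs_of_nonneg (by positivity)
    rw [habs]
    have : ((m i : ℤ) + 1) ≤ (M : ℤ) := by exact_mod_cast hi
    exact mul_le_mul this (hg _) (abs_nonneg _) (by exact_mod_cast Nat.zero_le M)

/-- Coefficient bound for a product in terms of the support size of the second factor. -/
private lemma coeff_mul_bound (p q : MvPolynomial (Fin 2) ℤ) (Hp Hq : ℤ) (n : ℕ)
    (h0 : 0 ≤ Hp) (h0' : 0 ≤ Hq)
    (hp : ∀ m, |p.coeff m| ≤ Hp) (hq : ∀ m, |q.coeff m| ≤ Hq)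
    (hcard : q.support.card ≤ n) (m : Fin 2 →₀ ℕ) :
    |(p * q).coeff m| ≤ Hp * n * Hq := by
  rw [coeff_mul]
  calc |∑ x ∈ Finset.HasAntidiagonal.antidiagonal m, coeff x.1 p * coeff x.2 q|
      ≤ ∑ x ∈ Finset.HasAntidiagonal.antidiagonal m, |coeff x.1 p * coeff x.2 q| :=
        Finset.abs_sum_le_sum_abs _ _
    _ = ∑ x ∈ (Finset.HasAntidiagonal.antidiagonal m).filter (fun x => x.2 ∈ q.support),
          |coeff x.1 p * coeff x.2 q| := by
        refine (Finset.sum_filter_of_ne ?_).symm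
        intro x _ hx
        rw [MvPolynomial.mem_support_iff]
        intro hz
        apply hx
        rw [show coeff x.2 q = q.coeff x.2 from rfl, hz, mul_zero, abs_zero]
    _ ≤ ∑ _x ∈ (Finset.HasAntidiagonal.antidiagonal m).filter (fun x => x.2 ∈ q.support), Hp * Hq := by
        apply Finset.sum_le_sum
        intro x _
        rw [abs_mul]
        exact mul_le_mul (hp _) (hq _) (abs_nonneg _) h0
    _ = ((Finset.HasAntidiagonal.antidiagonal m).filter (fun x => x.2 ∈ q.support)).card • (Hp * Hq) := by
        rw [Finset.sum_const]
    _ ≤ (n : ℤ) * (Hp * Hq) := by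
        rw [nsmul_eq_mul]
        apply mul_le_mul_of_nonneg_right _ (mul_nonneg h0 h0')
        have hle : ((Finset.HasAntidiagonal.antidiagonal m).filter (fun x => x.2 ∈ q.support)).card
            ≤ q.support.card := by
          apply Finset.card_le_card_of_injOn (fun x => x.2)
          · intro x hx
            exact (Finset.mem_filter.1 hx).2
          · intro x hx y hy he
            have hx' := Finset.HasAntidiagonal.mem_antidiagonal.1 (Finset.mem_filter.1 hx).1
            have hy' := Finset.HasAntidiagonal.mem_antidiagonal.1 (Finset.mem_filter.1 hy).1
            have he' : x.2 = y.2 := he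
            have hx1 : x.1 = y.1 := by
              have h5 : x.1 + x.2 = y.1 + y.2 := by rw [hx', hy']
              rw [he'] at h5
              exact add_right_cancel h5
            exact Prod.ext hx1 he'
        exact_mod_cast hle.trans hcard
    _ = Hp * n * Hq := by ring
  
/-- For `D = A ∂_X + B ∂_Y` with `A, B ∈ ℤ[X,Y]`, `deg A, deg B ≤ d`,
`‖A‖_∞, ‖B‖_∞ ≤ H`, and `f` of degree at most `N`: for every `i ≥ 1`,
`‖D^i(f)‖_∞ ≤ 2^i H^i (∏_{k=0}^{i-1} (k(d-1)+N)³) ‖f‖_∞`. -/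
theorem height_iterate_bound
    (A B : MvPolynomial (Fin 2) ℤ) (d N : ℕ) (H : ℤ) (hd : 1 ≤ d)
    (hdA : A.totalDegree ≤ d) (hdB : B.totalDegree ≤ d)
    (hA : ∀ m, |A.coeff m| ≤ H) (hB : ∀ m, |B.coeff m| ≤ H)
    (f : MvPolynomial (Fin 2) ℤ) (Cf : ℤ)
    (hdf : f.totalDegree ≤ N) (hf : ∀ m, |f.coeff m| ≤ Cf) :
    ∀ i, 1 ≤ i → ∀ m,
      |(((fun h => A * pderiv 0 h + B * pderiv 1 h)^[i]) f).coeff m|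
        ≤ 2 ^ i * H ^ i * (∏ k ∈ Finset.range i, ((k * (d - 1) + N : ℕ) : ℤ) ^ 3) * Cf := by
  have hH : 0 ≤ H := le_trans (abs_nonneg _) (hA 0)
  have hCf : 0 ≤ Cf := le_trans (abs_nonneg _) (hf 0)
  have hdA' : ∀ m ∈ A.support, m 0 + m 1 ≤ d := fun m hm => by
    have := le_trans (le_totalDegree hm) hdA; rwa [deg2_eq] at this
  have hdB' : ∀ m ∈ B.support, m 0 + m 1 ≤ d := fun m hm => by
    have := le_trans (le_totalDegree hm) hdB; rwa [deg2_eq] at this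
  -- the key step
  have step : ∀ (P : MvPolynomial (Fin 2) ℤ) (i : Fin 2) (g : MvPolynomial (Fin 2) ℤ)
      (M : ℕ) (C : ℤ), 0 ≤ C →
      (∀ m ∈ P.support, m 0 + m 1 ≤ d) → (∀ m, |P.coeff m| ≤ H) →
      (∀ m ∈ g.support, m 0 + m 1 ≤ M) → (∀ m, |g.coeff m| ≤ C) →
      (∀ m ∈ (P * pderiv i g).support, m 0 + m 1 ≤ M + (d - 1)) ∧
      (∀ m, |(P * pderiv i g).coeff m| ≤ H * (M : ℤ) ^ 3 * C) := by
    intro P i g M C hC hdP hP hdg hg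
    have hsup := pderiv_support i g M hdg
    constructor
    · intro m hm
      have := MvPolynomial.support_mul P (pderiv i g) hm
      rw [Finset.mem_add] at this
      obtain ⟨a, ha, b, hb, hab⟩ := this
      have h1 := hdP a ha
      have h2 := hsup b hb
      have hm0 : m 0 = a 0 + b 0 := by rw [← hab]; rfl
      have hm1 : m 1 = a 1 + b 1 := by rw [← hab]; rfl
      omega
    · intro m
      have hcard : (pderiv i g).support.card ≤ M ^ 2 := by
        apply card_support_le
        intro m hm
        have := hsup m hm
        omega
      have hcoeff := pderiv_coeff_bound i g M C hC hdg hg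
      have := coeff_mul_bound P (pderiv i g) H ((M : ℤ) * C) (M ^ 2) hH
        (mul_nonneg (by exact_mod_cast Nat.zero_le M) hC) hP hcoeff hcard m
      calc |(P * pderiv i g).coeff m| ≤ H * (M ^ 2 : ℕ) * ((M : ℤ) * C) := this
        _ = H * (M : ℤ) ^ 3 * C := by push_cast; ring
  -- main induction (the hypothesis `1 ≤ i` is not needed)
  have main : ∀ i,
      (∀ m ∈ (((fun h => A * pderiv 0 h + B * pderiv 1 h)^[i]) f).support,
        m 0 + m 1 ≤ i * (d - 1) + N) ∧
      (∀ m, |(((fun h => A * pderiv 0 h + B * pderiv 1 h)^[i]) f).coeff m|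
        ≤ 2 ^ i * H ^ i * (∏ k ∈ Finset.range i, ((k * (d - 1) + N : ℕ) : ℤ) ^ 3) * Cf) := by
    intro i
    induction i with
    | zero =>
        constructor
        · intro m hm
          simp only [Function.iterate_zero, id_eq] at hm
          have := le_trans (le_totalDegree hm) hdf
          rw [deg2_eq] at this
          simpa using this
        · intro m
          simpa using hf m
    | succ i ih =>
        obtain ⟨ihd, ihc⟩ := ih
        set g := ((fun h => A * pderiv 0 h + B * pderiv 1 h)^[i]) f with hg
        set C := 2 ^ i * H ^ i * (∏ k ∈ Finset.range i, ((k * (d - 1) + N : ℕ) : ℤ) ^ 3) * Cf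
          with hCdef
        have hC : 0 ≤ C := le_trans (abs_nonneg _) (ihc 0)
        have hs0 := step A 0 g (i * (d - 1) + N) C hC hdA' hA ihd ihc
        have hs1 := step B 1 g (i * (d - 1) + N) C hC hdB' hB ihd ihc
        have hiter : ((fun h => A * pderiv 0 h + B * pderiv 1 h)^[i+1]) f
            = A * pderiv 0 g + B * pderiv 1 g := by
          rw [Function.iterate_succ_apply', hg]
        constructor
        · intro m hm
          rw [hiter] at hm
          rw [MvPolynomial.mem_support_iff, coeff_add] at hm
          have : coeff m (A * pderiv 0 g) ≠ 0 ∨ coeff m (B * pderiv 1 g) ≠ 0 := by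
            by_contra h
            push_neg at h
            rw [h.1, h.2, add_zero] at hm
            exact hm rfl
          rcases this with h | h
          · have := hs0.1 m (MvPolynomial.mem_support_iff.2 h)
            have h1 : (i + 1) * (d - 1) + N = (i * (d - 1) + N) + (d - 1) := by ring
            omega
          · have := hs1.1 m (MvPolynomial.mem_support_iff.2 h)
            have h1 : (i + 1) * (d - 1) + N = (i * (d - 1) + N) + (d - 1) := by ring
            omega
        · intro m
          rw [hiter, coeff_add]
          set M := i * (d - 1) + N with hM
          calc |coeff m (A * pderiv 0 g) + coeff m (B * pderiv 1 g)|
              ≤ |coeff m (A * pderiv 0 g)| + |coeff m (B * pderiv 1 g)| := abs_add_le _ _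
            _ ≤ H * (M : ℤ) ^ 3 * C + H * (M : ℤ) ^ 3 * C :=
                add_le_add (hs0.2 m) (hs1.2 m)
            _ = 2 ^ (i+1) * H ^ (i+1) *
                  (∏ k ∈ Finset.range (i+1), ((k * (d - 1) + N : ℕ) : ℤ) ^ 3) * Cf := by
                rw [Finset.prod_range_succ, hCdef]
                ring
  intro i _ m
  exact (main i).2 m
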